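/- arXiv:2510.14311 — 2 statements merged into one kernel-verified Lean document; each statement's English description precedes it below -/
import Mathlib

section
/- Let p > 1 and let A, B, C, D be real numbers with A + B + C + D = 0. If A < 0, pA + (p−1)B + C ≤ 0, and pA + (p−2)B ≤ 0, then for every τ > 1 one has A(τ^p − 1)/(τ−1) + B(τ^{p−1} − 1)/(τ−1) + C < 0. -/
theorem I1_neg (p A B C D : ℝ) (hp : 1 < p) (hsum : A + B + C + D = 0)
    (hA : A < 0) (hB : p * A + (p - 1) * B + C ≤ 0) (hC : p * A + (p - 2) * B ≤ 0) :
    ∀ τ : ℝ, 1 < τ →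
      A * (τ ^ p - 1) / (τ - 1) + B * (τ ^ (p - 1) - 1) / (τ - 1) + C < 0 := by
  intro τ hτ
  have hτ0 : (0:ℝ) < τ := lt_trans one_pos hτ
  have hτ1 : (0:ℝ) < τ - 1 := sub_pos.mpr hτ
  set f : ℝ → ℝ := fun t => A * (t ^ p - 1) + B * (t ^ (p - 1) - 1) + C * (t - 1) with hf
  set g : ℝ → ℝ := fun t => A * (p * t ^ (p - 1)) + B * ((p - 1) * t ^ (p - 2)) + C with hg
  -- derivative of f is g on positive reals
  have hdf : ∀ t : ℝ, 0 < t → HasDerivAt f (g t) t := by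
    intro t ht
    have h1 : HasDerivAt (fun x : ℝ => x ^ p) (p * t ^ (p - 1)) t :=
      Real.hasDerivAt_rpow_const (Or.inl (ne_of_gt ht))
    have h2 : HasDerivAt (fun x : ℝ => x ^ (p - 1)) ((p - 1) * t ^ (p - 1 - 1)) t :=
      Real.hasDerivAt_rpow_const (Or.inl (ne_of_gt ht))
    have h3 : HasDerivAt (fun x : ℝ => x) 1 t := hasDerivAt_id t
    rw [show p - 1 - 1 = p - 2 by ring] at h2
    have := (((h1.sub_const 1).const_mul A).add ((h2.sub_const 1).const_mul B)).add
      ((h3.sub_const 1).const_mul C)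
    rw [show g t = A * (p * t ^ (p - 1)) + B * ((p - 1) * t ^ (p - 2)) + C * 1 by simp [hg]]
    exact this
  -- derivative of g
  have hdg : ∀ t : ℝ, 0 < t →
      HasDerivAt g (A * (p * ((p - 1) * t ^ (p - 1 - 1))) +
        B * ((p - 1) * ((p - 2) * t ^ (p - 2 - 1)))) t := by
    intro t ht
    have h1 : HasDerivAt (fun x : ℝ => x ^ (p - 1)) ((p - 1) * t ^ (p - 1 - 1)) t :=
      Real.hasDerivAt_rpow_const (Or.inl (ne_of_gt ht))
    have h2 : HasDerivAt (fun x : ℝ => x ^ (p - 2)) ((p - 2) * t ^ (p - 2 - 1)) t :=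
      Real.hasDerivAt_rpow_const (Or.inl (ne_of_gt ht))
    exact (((h1.const_mul p).const_mul A).add ((h2.const_mul (p - 1)).const_mul B)).add_const C
  -- g is strictly decreasing on [1, ∞)
  have hganti : StrictAntiOn g (Set.Ici (1:ℝ)) := by
    apply strictAntiOn_of_deriv_neg (convex_Ici 1)
    · exact ContinuousOn.congr (continuousOn_of_forall_continuousAt
        (fun x hx => (hdg x (lt_of_lt_of_le one_pos hx)).continuousAt)) (fun x _ => rfl)
    · intro x hx
      rw [interior_Ici] at hx
      have hx1 : (1:ℝ) < x := hx
      have hx0 : (0:ℝ) < x := lt_trans one_pos hx1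
      rw [(hdg x hx0).deriv]
      have hfac : x ^ (p - 1 - 1) = x ^ (p - 2 - 1) * x := by
        rw [← Real.rpow_add_one (ne_of_gt hx0)]; ring_nf
      rw [hfac]
      have hpos : (0:ℝ) < x ^ (p - 2 - 1) := Real.rpow_pos_of_pos hx0 _
      have hpa : p * A * (x - 1) < 0 :=
        mul_neg_of_neg_of_pos (mul_neg_of_pos_of_neg (lt_trans one_pos hp) hA)
          (sub_pos.mpr hx1)
      have hneg : p * A * x + (p - 2) * B < 0 := by nlinarith
      calc A * (p * ((p - 1) * (x ^ (p - 2 - 1) * x))) +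
            B * ((p - 1) * ((p - 2) * x ^ (p - 2 - 1)))
          = (p - 1) * x ^ (p - 2 - 1) * (p * A * x + (p - 2) * B) := by ring
        _ < 0 := mul_neg_of_pos_of_neg (mul_pos (sub_pos.mpr hp) hpos) hneg
  -- hence g t < g 1 ≤ 0 on (1, ∞)
  have hg1 : g 1 ≤ 0 := by
    simp only [hg, Real.one_rpow]
    linarith
  have hgneg : ∀ t : ℝ, 1 < t → g t < 0 := fun t ht =>
    lt_of_lt_of_le (hganti Set.self_mem_Ici (le_of_lt ht) ht) hg1
  -- f is strictly decreasing on [1, ∞)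
  have hfanti : StrictAntiOn f (Set.Ici (1:ℝ)) := by
    apply strictAntiOn_of_deriv_neg (convex_Ici 1)
    · exact ContinuousOn.congr (continuousOn_of_forall_continuousAt
        (fun x hx => (hdf x (lt_of_lt_of_le one_pos hx)).continuousAt)) (fun x _ => rfl)
    · intro x hx
      rw [interior_Ici] at hx
      rw [(hdf x (lt_trans one_pos hx)).deriv]
      exact hgneg x hx
  have hf1 : f 1 = 0 := by simp [hf]
  have hfneg : f τ < 0 := by
    have := hfanti Set.self_mem_Ici (le_of_lt hτ) hτ
    rwa [hf1] at this
  have heq : A * (τ ^ p - 1) / (τ - 1) + B * (τ ^ (p - 1) - 1) / (τ - 1) + C = f τ / (τ - 1) := by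
    field_simp [hf]
    show _ = A * (τ ^ p - 1) + B * (τ ^ (p - 1) - 1) + C * (τ - 1)
    ring
  rw [heq]
  exact div_neg_of_neg_of_pos hfneg hτ1
end

section
/- Let p > 1, A < 0, and pA + (p−2)B ≤ 0 for real numbers A, B. Then the function I₂(τ) = (p−1)A τ^p + (−pA + (p−2)B) τ^{p−1} − (p−1)B τ^{p−2} + A + B satisfies I₂(1) = 0 and I₂'(τ) = (p−1) τ^{p−3} (τ−1)(pAτ + (p−2)B) < 0 for all τ > 1; consequently I₂(τ) < 0 for all τ > 1. -/
theorem I2_neg (p A B : ℝ) (hp : 1 < p) (hA : A < 0) (hC : p * A + (p - 2) * B ≤ 0) :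
    (fun τ : ℝ => (p - 1) * A * τ ^ p + (-(p * A) + (p - 2) * B) * τ ^ (p - 1)
        - (p - 1) * B * τ ^ (p - 2) + A + B) 1 = 0 ∧
    (∀ τ : ℝ, 1 < τ →
      deriv (fun τ : ℝ => (p - 1) * A * τ ^ p + (-(p * A) + (p - 2) * B) * τ ^ (p - 1)
          - (p - 1) * B * τ ^ (p - 2) + A + B) τ
        = (p - 1) * τ ^ (p - 3) * (τ - 1) * (p * A * τ + (p - 2) * B) ∧
      (p - 1) * τ ^ (p - 3) * (τ - 1) * (p * A * τ + (p - 2) * B) < 0) ∧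
    (∀ τ : ℝ, 1 < τ →
      (p - 1) * A * τ ^ p + (-(p * A) + (p - 2) * B) * τ ^ (p - 1)
        - (p - 1) * B * τ ^ (p - 2) + A + B < 0) := by
  set f : ℝ → ℝ := fun τ : ℝ => (p - 1) * A * τ ^ p + (-(p * A) + (p - 2) * B) * τ ^ (p - 1)
      - (p - 1) * B * τ ^ (p - 2) + A + B with hf
  have h1 : f 1 = 0 := by
    simp only [hf, Real.one_rpow]; ring
  have hderiv : ∀ τ : ℝ, 0 < τ → HasDerivAt f
      ((p - 1) * A * (p * τ ^ (p - 1)) + (-(p * A) + (p - 2) * B) * ((p - 1) * τ ^ (p - 2))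
        - (p - 1) * B * ((p - 2) * τ ^ (p - 3))) τ := by
    intro τ hτ
    have h1 := ((Real.hasDerivAt_rpow_const (p := p) (Or.inl hτ.ne'))).const_mul ((p - 1) * A)
    have h2 := ((Real.hasDerivAt_rpow_const (p := p - 1) (Or.inl hτ.ne'))).const_mul
      (-(p * A) + (p - 2) * B)
    have h3 := ((Real.hasDerivAt_rpow_const (p := p - 2) (Or.inl hτ.ne'))).const_mul
      ((p - 1) * B)
    have := (((h1.add h2).sub h3).add_const A).add_const B
    refine this.congr_deriv ?_
    ring_nf
  have key : ∀ τ : ℝ, 0 < τ →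
      (p - 1) * A * (p * τ ^ (p - 1)) + (-(p * A) + (p - 2) * B) * ((p - 1) * τ ^ (p - 2))
        - (p - 1) * B * ((p - 2) * τ ^ (p - 3))
      = (p - 1) * τ ^ (p - 3) * (τ - 1) * (p * A * τ + (p - 2) * B) := by
    intro τ hτ
    have e1 : τ ^ (p - 1) = τ ^ (p - 2) * τ := by
      rw [← Real.rpow_add_one hτ.ne']; ring_nf
    have e2 : τ ^ (p - 2) = τ ^ (p - 3) * τ := by
      rw [← Real.rpow_add_one hτ.ne']; ring_nf
    rw [e1, e2]; ring
  have hneg : ∀ τ : ℝ, 1 < τ →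
      (p - 1) * τ ^ (p - 3) * (τ - 1) * (p * A * τ + (p - 2) * B) < 0 := by
    intro τ hτ
    have hτ0 : (0:ℝ) < τ := lt_trans one_pos hτ
    have hpow : 0 < τ ^ (p - 3) := Real.rpow_pos_of_pos hτ0 _
    have hfac : p * A * τ + (p - 2) * B < 0 := by
      have hpA : p * A < 0 := mul_neg_of_pos_of_neg (lt_trans one_pos hp) hA
      nlinarith
    have : 0 < (p - 1) * τ ^ (p - 3) * (τ - 1) :=
      mul_pos (mul_pos (by linarith) hpow) (by linarith)
    exact mul_neg_of_pos_of_neg this hfac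
  refine ⟨h1, fun τ hτ => ⟨?_, hneg τ hτ⟩, ?_⟩
  · rw [(hderiv τ (lt_trans one_pos hτ)).deriv, key τ (lt_trans one_pos hτ)]
  · intro τ hτ
    have hanti : StrictAntiOn f (Set.Ici 1) := by
      apply StrictAntiOn.mono (s := Set.Ici (1:ℝ))
        (strictAntiOn_of_deriv_neg (convex_Ici 1) ?_ ?_) le_rfl
      · intro x hx
        exact (hderiv x (lt_of_lt_of_le one_pos hx)).continuousAt.continuousWithinAt
      · intro x hx
        rw [interior_Ici] at hx
        rw [(hderiv x (lt_trans one_pos hx)).deriv, key x (lt_trans one_pos hx)]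
        exact hneg x hx
    have := hanti (Set.self_mem_Ici) (Set.mem_Ici.mpr hτ.le) hτ
    rw [h1] at this
    exact this
end
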